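/- Let n, m ∈ ℕ, m ≥ d_1 ≥ d_2 ≥ … ≥ d_n ≥ 1, and let B be drawn from GenR(n, m, d_1, …, d_n). Let S = {w_1, …, w_k} ⊆ L be any fixed set of k left nodes and H_k = {u_1, …, u_k} the set of the k left nodes of highest degree. Then |N(S)| is stochastically dominated by |N(H_k)|: for every x, Pr[|N(S)| ≥ x] ≤ Pr[|N(H_k)| ≥ x]. -/

import Mathlib

open Finset

/-- One step of the greedy algorithm on the bipartite graph whose left nodes are
`Fin n`, right nodes are `Fin m`, and whose neighborhoods are given by `N`.
It adds to the current solution `S` the left node with largest marginal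
coverage `|N(u) \ N(S)|`, breaking ties by smallest index. -/
noncomputable def greedyStep {n m : ℕ} (N : Fin n → Finset (Fin m))
    (S : Finset (Fin n)) : Finset (Fin n) :=
  if h : (Finset.univ \ S).Nonempty then
    insert
      (((Finset.univ \ S).filter fun u =>
          ((N u) \ S.biUnion N).card =
            (Finset.univ \ S).sup fun v => ((N v) \ S.biUnion N).card).min'
        (by
          obtain ⟨u, hu, hsup⟩ :=
            Finset.exists_mem_eq_sup (Finset.univ \ S) h
              (fun v => ((N v) \ S.biUnion N).card)
          exact ⟨u, Finset.mem_filter.mpr ⟨hu, hsup.symm⟩⟩))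
      S
  else S

/-- The greedy solution after `k` iterations (`greedy N 0 = ∅`). -/
noncomputable def greedy {n m : ℕ} (N : Fin n → Finset (Fin m)) : ℕ → Finset (Fin n)
  | 0 => ∅
  | k + 1 => greedyStep N (greedy N k)

/-- The coverage `|N(O_k)|` of an optimal solution with cardinality constraint `k`. -/
def optValue {n m : ℕ} (N : Fin n → Finset (Fin m)) (k : ℕ) : ℕ :=
  (Finset.univ.powerset.filter fun S : Finset (Fin n) => S.card ≤ k).sup
    fun S => (S.biUnion N).card

/-- The sample space of the random model `GenR(n, m, d_1, …, d_n)`: all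
neighborhood maps with `n` left nodes and `m` right nodes in which the `i`-th
left node has exactly `d i` neighbors. -/
def genGraphs (n m : ℕ) (d : Fin n → ℕ) : Finset (Fin n → Finset (Fin m)) :=
  Finset.univ.filter fun N => ∀ i, (N i).card = d i

/-- Expectation of `f` under the model `GenR(n, m, d_1, …, d_n)`
(uniform distribution on `genGraphs n m d`). -/
noncomputable def genExp (n m : ℕ) (d : Fin n → ℕ)
    (f : (Fin n → Finset (Fin m)) → ℝ) : ℝ :=
  (∑ N ∈ genGraphs n m d, f N) / (genGraphs n m d).card

open scoped Classical in
/-- Probability of the event `p` under the model `GenR(n, m, d_1, …, d_n)`. -/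
noncomputable def genProb (n m : ℕ) (d : Fin n → ℕ)
    (p : (Fin n → Finset (Fin m)) → Prop) : ℝ :=
  ((genGraphs n m d).filter p).card / (genGraphs n m d).card

/-- The first `k` left nodes `{u_1, …, u_k}`; when the degrees are sorted in
decreasing order these are the `k` left nodes of largest degree. -/
def firstK (n k : ℕ) : Finset (Fin n) :=
  Finset.univ.filter fun i : Fin n => (i : ℕ) < k

/-- **Lemma B.12.** Under `GenR(n, m, d_1, …, d_n)` with
`m ≥ d_1 ≥ … ≥ d_n ≥ 1`, the coverage `|N(S)|` of any fixed set `S` of `k`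
left nodes is stochastically dominated by the coverage `|N(H_k)|` of the set
`H_k` of the `k` left nodes of largest degree:
`Pr[|N(S)| ≥ x] ≤ Pr[|N(H_k)| ≥ x]` for every `x`. -/
lemma swap_card_le (n m : ℕ) (d : Fin n → ℕ) (x : ℝ) (T : Finset (Fin n))
    (s j : Fin n) (hs : s ∈ T) (hj : j ∉ T) (hds : d s ≤ d j) (hdj : d j ≤ m) :
    ((genGraphs n m d).filter fun N => ((T.biUnion N).card : ℝ) ≥ x).card ≤
    ((genGraphs n m d).filter fun N =>
        (((insert j (T.erase s)).biUnion N).card : ℝ) ≥ x).card := by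
  classical
  have hsj : s ≠ j := fun h => hj (h ▸ hs)
  set X := (genGraphs n m d).filter fun N => ((T.biUnion N).card : ℝ) ≥ x with hX
  set Y := (genGraphs n m d).filter fun N =>
      (((insert j (T.erase s)).biUnion N).card : ℝ) ≥ x with hY
  -- tagged sets
  set XS := X.sigma (fun N =>
    (Finset.powersetCard (d j - d s) ((univ : Finset (Fin m)) \ N s)) ×ˢ
      (Finset.powersetCard (d s) (univ : Finset (Fin m)))) with hXS
  set YS := Y.sigma (fun N =>
    (Finset.powersetCard (d s) (N j)) ×ˢ
      (Finset.powersetCard (d j) (univ : Finset (Fin m)))) with hYS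
  have hXcard : XS.card = X.card * ((m - d s).choose (d j - d s) * m.choose (d s)) := by
    rw [hXS, Finset.card_sigma]
    rw [Finset.sum_congr rfl (fun N hN => ?_), Finset.sum_const, smul_eq_mul]
    have hNg : ∀ i, (N i).card = d i := by
      have := Finset.mem_filter.mp (Finset.mem_filter.mp hN).1
      exact this.2
    have hcs : ((univ : Finset (Fin m)) \ N s).card = m - d s := by
      rw [Finset.card_sdiff_of_subset (Finset.subset_univ _), Finset.card_univ, Fintype.card_fin, hNg s]
    rw [Finset.card_product, Finset.card_powersetCard, Finset.card_powersetCard, hcs,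
      Finset.card_univ, Fintype.card_fin]
  have hYcard : YS.card = Y.card * ((d j).choose (d s) * m.choose (d j)) := by
    rw [hYS, Finset.card_sigma]
    rw [Finset.sum_congr rfl (fun N hN => ?_), Finset.sum_const, smul_eq_mul]
    have hNg : ∀ i, (N i).card = d i := by
      have := Finset.mem_filter.mp (Finset.mem_filter.mp hN).1
      exact this.2
    rw [Finset.card_product, Finset.card_powersetCard, Finset.card_powersetCard,
      Finset.card_univ, Fintype.card_fin, hNg j]
  -- the injection
  have hinj : XS.card ≤ YS.card := by
    apply Finset.card_le_card_of_injOn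
      (fun p => ⟨Function.update (Function.update p.1 j (p.1 s ∪ p.2.1)) s p.2.2,
        (p.1 s, p.1 j)⟩)
    · rintro ⟨N, E, A⟩ hp
      simp only [hXS, Finset.mem_coe, Finset.mem_sigma, Finset.mem_product, Finset.mem_powersetCard] at hp
      obtain ⟨hNX, ⟨hE, hEcard⟩, hA, hAcard⟩ := hp
      have hNg := Finset.mem_filter.mp hNX
      have hNd : ∀ i, (N i).card = d i := (Finset.mem_filter.mp hNg.1).2
      have hEdisj : Disjoint (N s) E := by
        refine Finset.disjoint_left.mpr fun a ha hae => ?_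
        exact (Finset.mem_sdiff.mp (hE hae)).2 ha
      set N' := Function.update (Function.update N j (N s ∪ E)) s A with hN'
      have hN's : N' s = A := Function.update_self _ _ _
      have hN'j : N' j = N s ∪ E := by
        rw [hN', Function.update_of_ne (Ne.symm hsj), Function.update_self]
      have hN'other : ∀ i, i ≠ s → i ≠ j → N' i = N i := fun i his hij => by
        rw [hN', Function.update_of_ne his, Function.update_of_ne hij]
      have hN'jcard : (N' j).card = d j := by
        rw [hN'j, Finset.card_union_of_disjoint hEdisj, hNd s, hEcard]
        omega
      simp only [hYS, Finset.mem_coe, Finset.mem_sigma, Finset.mem_product, Finset.mem_powersetCard]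
      rw [← hN']
      refine ⟨Finset.mem_filter.mpr ⟨Finset.mem_filter.mpr ⟨Finset.mem_univ _, fun i => ?_⟩, ?_⟩,
        ⟨?_, hNd s⟩, Finset.subset_univ _, hNd j⟩
      · by_cases his : i = s
        · rw [his, hN's, hAcard]
        by_cases hij : i = j
        · rw [hij]; exact hN'jcard
        · rw [hN'other i his hij]; exact hNd i
      · -- event
        have hsub : T.biUnion N ⊆ (insert j (T.erase s)).biUnion N' := by
          intro a ha
          obtain ⟨t, htT, hta⟩ := Finset.mem_biUnion.mp ha
          by_cases hts : t = s
          · exact Finset.mem_biUnion.mpr ⟨j, Finset.mem_insert_self _ _,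
              by rw [hN'j]; exact Finset.mem_union_left _ (hts ▸ hta)⟩
          · have htj : t ≠ j := fun h => hj (h ▸ htT)
            exact Finset.mem_biUnion.mpr ⟨t, Finset.mem_insert_of_mem
              (Finset.mem_erase.mpr ⟨hts, htT⟩), by rw [hN'other t hts htj]; exact hta⟩
        have := Finset.card_le_card hsub
        have hx : ((T.biUnion N).card : ℝ) ≥ x := hNg.2
        exact le_trans hx (by exact_mod_cast this)
      · rw [hN'j]; exact Finset.subset_union_left
    · -- injectivity
      rintro ⟨N, E, A⟩ hp ⟨N₂, E₂, A₂⟩ hp₂ heq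
      simp only [hXS, Finset.mem_sigma, Finset.mem_product, Finset.mem_powersetCard,
        Finset.mem_coe] at hp hp₂
      obtain ⟨hNX, ⟨hE, hEcard⟩, hA, hAcard⟩ := hp
      obtain ⟨hNX₂, ⟨hE₂, hEcard₂⟩, hA₂, hAcard₂⟩ := hp₂
      simp only [Sigma.mk.inj_iff, Prod.mk.injEq] at heq
      obtain ⟨hfun, hrest⟩ := heq
      have hrest' : (N s, N j) = (N₂ s, N₂ j) := by
        have := hrest
        rwa [heq_iff_eq] at this
      have hNs : N s = N₂ s := (Prod.mk.injEq _ _ _ _).mp hrest' |>.1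
      have hNj : N j = N₂ j := (Prod.mk.injEq _ _ _ _).mp hrest' |>.2
      have hAeq : A = A₂ := by
        have := congrFun hfun s
        simpa [Function.update_self] using this
      have hjeq : N s ∪ E = N₂ s ∪ E₂ := by
        have := congrFun hfun j
        simpa [Function.update_of_ne (Ne.symm hsj), Function.update_self] using this
      have hEeq : E = E₂ := by
        have h1 : E = (N s ∪ E) \ N s := by
          refine (Finset.union_sdiff_cancel_left ?_).symm
          exact Finset.disjoint_left.mpr fun a ha hae => (Finset.mem_sdiff.mp (hE hae)).2 ha
        have h2 : E₂ = (N₂ s ∪ E₂) \ N₂ s := by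
          refine (Finset.union_sdiff_cancel_left ?_).symm
          exact Finset.disjoint_left.mpr fun a ha hae => (Finset.mem_sdiff.mp (hE₂ hae)).2 ha
        rw [h1, h2, hjeq, hNs]
      have hNeq : N = N₂ := by
        funext i
        by_cases his : i = s
        · rw [his, hNs]
        by_cases hij : i = j
        · rw [hij, hNj]
        · have := congrFun hfun i
          simpa [Function.update_of_ne his, Function.update_of_ne hij] using this
      simp [hNeq, hEeq, hAeq]
  rw [hXcard, hYcard] at hinj
  have hident : (m - d s).choose (d j - d s) * m.choose (d s) =
      (d j).choose (d s) * m.choose (d j) := by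
    rw [mul_comm, mul_comm ((d j).choose (d s))]
    exact (Nat.choose_mul (n := m) hds).symm
  rw [hident] at hinj
  have hpos : 0 < (d j).choose (d s) * m.choose (d j) :=
    Nat.mul_pos (Nat.choose_pos hds) (Nat.choose_pos hdj)
  exact Nat.le_of_mul_le_mul_right hinj hpos

lemma firstK_card' (n k : ℕ) (hk : k ≤ n) : (firstK n k).card = k := by
  classical
  have : firstK n k = Finset.map ⟨Fin.castLE hk, Fin.castLE_injective hk⟩ Finset.univ := by
    ext i
    simp only [firstK, Finset.mem_filter, Finset.mem_univ, true_and, Finset.mem_map,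
      Function.Embedding.coeFn_mk]
    constructor
    · intro hi; exact ⟨⟨i.val, hi⟩, by ext; simp⟩
    · rintro ⟨j, -, rfl⟩; exact j.isLt
  rw [this, Finset.card_map, Finset.card_univ, Fintype.card_fin]

open scoped Classical in
lemma key_card' (n m : ℕ) (d : Fin n → ℕ) (hmono : Antitone d) (hdm : ∀ i, d i ≤ m)
    (k : ℕ) (x : ℝ) (r : ℕ) :
    ∀ T : Finset (Fin n), T.card = k → (T \ firstK n k).card = r →
    ((genGraphs n m d).filter fun N => ((T.biUnion N).card : ℝ) ≥ x).card ≤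
    ((genGraphs n m d).filter fun N => (((firstK n k).biUnion N).card : ℝ) ≥ x).card := by
  induction r with
  | zero =>
    intro T hT hr
    have hsub : T ⊆ firstK n k :=
      Finset.sdiff_eq_empty_iff_subset.mp (Finset.card_eq_zero.mp hr)
    have hkn : k ≤ n := by
      simpa [hT] using Finset.card_le_univ T
    have hTeq : T = firstK n k :=
      Finset.eq_of_subset_of_card_le hsub (by rw [firstK_card' n k hkn, hT])
    rw [hTeq]
  | succ r ih =>
    intro T hT hr
    have hkn : k ≤ n := by
      simpa [hT] using Finset.card_le_univ T
    have hFcard : (firstK n k).card = k := firstK_card' n k hkn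
    obtain ⟨s, hsmem⟩ : (T \ firstK n k).Nonempty := by
      rw [← Finset.card_pos, hr]; omega
    have hFT : (firstK n k \ T).Nonempty := by
      rw [← Finset.card_pos, Finset.card_sdiff_comm (by rw [hFcard, hT]), hr]; omega
    obtain ⟨j, hjmem⟩ := hFT
    have hsT : s ∈ T := (Finset.mem_sdiff.mp hsmem).1
    have hsF : s ∉ firstK n k := (Finset.mem_sdiff.mp hsmem).2
    have hjF : j ∈ firstK n k := (Finset.mem_sdiff.mp hjmem).1
    have hjT : j ∉ T := (Finset.mem_sdiff.mp hjmem).2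
    have hjk : (j : ℕ) < k := (Finset.mem_filter.mp hjF).2
    have hsk : k ≤ (s : ℕ) := by
      by_contra h
      exact hsF (Finset.mem_filter.mpr ⟨Finset.mem_univ _, by omega⟩)
    have hds : d s ≤ d j := hmono (by exact_mod_cast le_of_lt (lt_of_lt_of_le hjk hsk))
    have hsj : s ≠ j := fun h => hjT (h ▸ hsT)
    set T' := insert j (T.erase s) with hT'
    have hT'card : T'.card = k := by
      rw [hT', Finset.card_insert_of_notMem (fun h => hjT (Finset.mem_of_mem_erase h)),
        Finset.card_erase_of_mem hsT, hT]
      have : 1 ≤ k := by rw [← hT]; exact Finset.card_pos.mpr ⟨s, hsT⟩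
      omega
    have hT'r : (T' \ firstK n k).card = r := by
      have heq : T' \ firstK n k = (T \ firstK n k).erase s := by
        ext a
        simp only [hT', Finset.mem_sdiff, Finset.mem_insert, Finset.mem_erase]
        constructor
        · rintro ⟨(rfl | ⟨has, haT⟩), haF⟩
          · exact absurd hjF haF
          · exact ⟨has, haT, haF⟩
        · rintro ⟨has, haT, haF⟩
          exact ⟨Or.inr ⟨has, haT⟩, haF⟩
      rw [heq, Finset.card_erase_of_mem hsmem, hr]
      omega
    calc ((genGraphs n m d).filter fun N => ((T.biUnion N).card : ℝ) ≥ x).card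
        ≤ ((genGraphs n m d).filter fun N => ((T'.biUnion N).card : ℝ) ≥ x).card := by
          exact swap_card_le n m d x T s j hsT hjT hds (hdm j)
      _ ≤ _ := ih T' hT'card hT'r

theorem fixed_set_dominated_by_top_degrees (n m : ℕ) (d : Fin n → ℕ)
    (hmono : Antitone d) (hd1 : ∀ i, 1 ≤ d i) (hdm : ∀ i, d i ≤ m)
    (k : ℕ) (S : Finset (Fin n)) (hS : S.card = k) (x : ℝ) :
    genProb n m d (fun N => ((S.biUnion N).card : ℝ) ≥ x) ≤
      genProb n m d (fun N => (((firstK n k).biUnion N).card : ℝ) ≥ x) := by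
  classical
  unfold genProb
  have h := key_card' n m d hmono hdm k x (S \ firstK n k).card S hS rfl
  by_cases hc : (((genGraphs n m d).card : ℝ)) = 0
  · rw [hc, div_zero, div_zero]
  · have hpos : (0:ℝ) < ((genGraphs n m d).card : ℝ) :=
      lt_of_le_of_ne (Nat.cast_nonneg _) (Ne.symm hc)
    exact (div_le_div_iff_of_pos_right hpos).mpr (by exact_mod_cast h)
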